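/- Let 0 < p < 1 and 0 < q < 1, and define the bit-flip channel E_1 with Kraus operators {√p I, √(1−p) X} and the phase-flip channel E_2 with Kraus operators {√q I, √(1−q) Z}. Then E_1 and E_2 can be unambiguously discriminated by a single use when an ancilla is allowed: there exist an ancilla dimension d_a and a unit vector ψ ∈ ℂ² ⊗ ℂ^{d_a} such that (E_1 ⊗ I)(|ψ⟩⟨ψ|) and (E_2 ⊗ I)(|ψ⟩⟨ψ|) are unambiguously distinguishable. -/

import Mathlib

open Matrix Kronecker
open scoped ComplexOrder

noncomputable section

/-- A quantum operation on ℂ^d given by a finite family of Kraus operators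
satisfying the completeness condition. -/
structure QuantumOp (d : ℕ) where
  m : ℕ
  K : Fin m → Matrix (Fin d) (Fin d) ℂ
  complete : ∑ k, (K k)ᴴ * K k = 1

/-- The support of a quantum operation: the span of its Kraus operators. -/
def QuantumOp.supp {d : ℕ} (E : QuantumOp d) : Submodule ℂ (Matrix (Fin d) (Fin d) ℂ) :=
  Submodule.span ℂ (Set.range E.K)

/-- The output state (E ⊗ I)(|ψ⟩⟨ψ|) = Σ_k (E^k ⊗ I)|ψ⟩⟨ψ|(E^k ⊗ I)†. -/
def QuantumOp.output {d : ℕ} (E : QuantumOp d) (da : ℕ) (ψ : Fin d × Fin da → ℂ) :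
    Matrix (Fin d × Fin da) (Fin d × Fin da) ℂ :=
  ∑ k, (E.K k ⊗ₖ (1 : Matrix (Fin da) (Fin da) ℂ)) * vecMulVec ψ (star ψ) *
    (E.K k ⊗ₖ (1 : Matrix (Fin da) (Fin da) ℂ))ᴴ

/-- States σ_1, …, σ_n are unambiguously distinguishable if there is a POVM
{Π_0, Π_1, …, Π_n} with tr(Π_i σ_j) = 0 for i ≠ j and tr(Π_i σ_i) > 0. -/
def UnambiguouslyDistinguishable {μ : Type*} [Fintype μ] [DecidableEq μ] {n : ℕ}
    (σ : Fin n → Matrix μ μ ℂ) : Prop :=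
  ∃ P0 : Matrix μ μ ℂ, ∃ P : Fin n → Matrix μ μ ℂ,
    P0.PosSemidef ∧ (∀ i, (P i).PosSemidef) ∧
    (P0 + ∑ i, P i = 1) ∧
    (∀ i j, i ≠ j → (P i * σ j).trace = 0) ∧
    (∀ i, 0 < (P i * σ i).trace)

/-- The Pauli X matrix. -/
def pauliX : Matrix (Fin 2) (Fin 2) ℂ := !![0, 1; 1, 0]

/-- The Pauli Z matrix. -/
def pauliZ : Matrix (Fin 2) (Fin 2) ℂ := !![1, 0; 0, -1]

/-- The output state Σ_k (K_k ⊗ I)|ψ⟩⟨ψ|(K_k ⊗ I)† of the quantum operation with Kraus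
operators K on the input |ψ⟩⟨ψ|, with an ancilla of dimension da. -/
def outputOf {d m da : ℕ} (K : Fin m → Matrix (Fin d) (Fin d) ℂ)
    (ψ : Fin d × Fin da → ℂ) : Matrix (Fin d × Fin da) (Fin d × Fin da) ℂ :=
  ∑ k, (K k ⊗ₖ (1 : Matrix (Fin da) (Fin da) ℂ)) * vecMulVec ψ (star ψ) *
    (K k ⊗ₖ (1 : Matrix (Fin da) (Fin da) ℂ))ᴴ

/-- Kraus operators {√p I, √(1-p) X} of the bit-flip channel. -/
def bitFlipK (p : ℝ) : Fin 2 → Matrix (Fin 2) (Fin 2) ℂ :=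
  ![(Real.sqrt p : ℂ) • 1, (Real.sqrt (1 - p) : ℂ) • pauliX]

/-- Kraus operators {√q I, √(1-q) Z} of the phase-flip channel. -/
def phaseFlipK (q : ℝ) : Fin 2 → Matrix (Fin 2) (Fin 2) ℂ :=
  ![(Real.sqrt q : ℂ) • 1, (Real.sqrt (1 - q) : ℂ) • pauliZ]

/-! ### Auxiliary lemmas -/

lemma outer_posSemidef {n : Type*} [Fintype n] (v : n → ℂ) :
    (vecMulVec v (star v)).PosSemidef := by
  rw [vecMulVec_eq (Fin 1), ← conjTranspose_replicateCol (ι := Fin 1) v]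
  exact posSemidef_self_mul_conjTranspose _

lemma psd_add' {n : Type*} [Fintype n] {A B : Matrix n n ℂ} (hA : A.PosSemidef)
    (hB : B.PosSemidef) : (A + B).PosSemidef := by
  exact Matrix.PosSemidef.add hA hB

lemma outer_conj {n : Type*} [Fintype n] (A : Matrix n n ℂ) (u : n → ℂ) :
    A * vecMulVec u (star u) * Aᴴ = vecMulVec (A *ᵥ u) (star (A *ᵥ u)) := by
  rw [vecMulVec_eq (Fin 1), vecMulVec_eq (Fin 1), star_mulVec, replicateRow_vecMul, replicateCol_mulVec,
    Matrix.mul_assoc, Matrix.mul_assoc, Matrix.mul_assoc]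

lemma trace_vecMulVec_mul {n : Type*} [Fintype n] (v w : n → ℂ) (M : Matrix n n ℂ) :
    (vecMulVec v w * M).trace = w ⬝ᵥ (M *ᵥ v) := by
  simp only [Matrix.trace, Matrix.diag, Matrix.mul_apply, vecMulVec_apply, dotProduct,
    Matrix.mulVec, Finset.mul_sum]
  rw [Finset.sum_comm]
  exact Finset.sum_congr rfl fun j _ => Finset.sum_congr rfl fun i _ => by ring

lemma trace_outer_outer {n : Type*} [Fintype n] (v u : n → ℂ) :
    (vecMulVec v (star v) * vecMulVec u (star u)).trace
      = (star v ⬝ᵥ u) * star (star v ⬝ᵥ u) := by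
  rw [trace_vecMulVec_mul]
  have h : star (star v ⬝ᵥ u) = star u ⬝ᵥ v := by
    rw [star_dotProduct, star_star]
  rw [h]
  simp only [dotProduct, Matrix.mulVec, vecMulVec_apply, Pi.star_apply, Finset.mul_sum,
    Finset.sum_mul]
  rw [Finset.sum_comm]
  exact Finset.sum_congr rfl fun j _ => Finset.sum_congr rfl fun i _ => by ring

lemma outputOf_eq {d m da : ℕ} (K : Fin m → Matrix (Fin d) (Fin d) ℂ)
    (ψ : Fin d × Fin da → ℂ) :
    outputOf K ψ = ∑ k, vecMulVec ((K k ⊗ₖ (1 : Matrix (Fin da) (Fin da) ℂ)) *ᵥ ψ)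
      (star ((K k ⊗ₖ (1 : Matrix (Fin da) (Fin da) ℂ)) *ᵥ ψ)) :=
  Finset.sum_congr rfl fun _ _ => outer_conj _ _

lemma trace_outer_outputOf {da : ℕ} (v : Fin 2 × Fin da → ℂ)
    (K : Fin 2 → Matrix (Fin 2) (Fin 2) ℂ) (ψ : Fin 2 × Fin da → ℂ) :
    (vecMulVec v (star v) * outputOf K ψ).trace
      = (star v ⬝ᵥ ((K 0 ⊗ₖ (1 : Matrix (Fin da) (Fin da) ℂ)) *ᵥ ψ)) *
          star (star v ⬝ᵥ ((K 0 ⊗ₖ (1 : Matrix (Fin da) (Fin da) ℂ)) *ᵥ ψ))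
      + (star v ⬝ᵥ ((K 1 ⊗ₖ (1 : Matrix (Fin da) (Fin da) ℂ)) *ᵥ ψ)) *
          star (star v ⬝ᵥ ((K 1 ⊗ₖ (1 : Matrix (Fin da) (Fin da) ℂ)) *ᵥ ψ)) := by
  rw [outputOf_eq, Fin.sum_univ_two, mul_add, trace_add, trace_outer_outer, trace_outer_outer]

/-- The normalized Bell-type vectors on ℂ² ⊗ ℂ². -/
def bvec (M : Matrix (Fin 2) (Fin 2) ℂ) : Fin 2 × Fin 2 → ℂ :=
  fun x => ((Real.sqrt 2 : ℝ) : ℂ)⁻¹ * M x.1 x.2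

def bell0 : Fin 2 × Fin 2 → ℂ := bvec !![1, 0; 0, 1]
def bell1 : Fin 2 × Fin 2 → ℂ := bvec !![0, 1; 1, 0]
def bell2 : Fin 2 × Fin 2 → ℂ := bvec !![1, 0; 0, -1]
def bell3 : Fin 2 × Fin 2 → ℂ := bvec !![0, 1; -1, 0]

lemma sqrt2_sq : ((Real.sqrt 2 : ℝ) : ℂ) * ((Real.sqrt 2 : ℝ) : ℂ) = 2 := by
  rw [← Complex.ofReal_mul, Real.mul_self_sqrt (by norm_num)]
  norm_num

lemma sqrt2_inv_sq : ((Real.sqrt 2 : ℝ) : ℂ)⁻¹ * ((Real.sqrt 2 : ℝ) : ℂ)⁻¹ = 2⁻¹ := by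
  rw [← mul_inv, sqrt2_sq]

lemma sqrt2_inv_pow : ((Real.sqrt 2 : ℝ) : ℂ)⁻¹ ^ 2 = 2⁻¹ := by
  rw [sq, sqrt2_inv_sq]

lemma sqrt2_pow : ((Real.sqrt 2 : ℝ) : ℂ) ^ 2 = 2 := by
  rw [sq, sqrt2_sq]

/-- for 0 < p,q < 1, the bit-flip and phase-flip channels can be
unambiguously discriminated by a single use when an ancilla is allowed. -/
theorem bitFlip_phaseFlip_unambig_with_ancilla (p q : ℝ)
    (hp₀ : 0 < p) (hp₁ : p < 1) (hq₀ : 0 < q) (hq₁ : q < 1) :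
    ∃ da : ℕ, 0 < da ∧ ∃ ψ : Fin 2 × Fin da → ℂ, star ψ ⬝ᵥ ψ = 1 ∧
      UnambiguouslyDistinguishable ![outputOf (bitFlipK p) ψ, outputOf (phaseFlipK q) ψ] := by
  refine ⟨2, by norm_num, bell0, ?_, ?_⟩
  · simp [bell0, bvec, dotProduct, Fintype.sum_prod_type, Fin.sum_univ_two,
      Complex.star_def, map_inv₀, Complex.conj_ofReal]
    rw [sqrt2_inv_sq]
    norm_num
  · -- scalar overlaps
    have c1p0 : star bell1 ⬝ᵥ ((bitFlipK p 0 ⊗ₖ (1 : Matrix (Fin 2) (Fin 2) ℂ)) *ᵥ bell0)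
        = 0 := by
      simp [bitFlipK, pauliX, bell0, bell1, bvec, dotProduct, Matrix.mulVec,
        Fintype.sum_prod_type, Fin.sum_univ_two, kroneckerMap_apply, Matrix.one_apply,
        Complex.star_def, map_inv₀, Complex.conj_ofReal]
    have c1p1 : star bell1 ⬝ᵥ ((bitFlipK p 1 ⊗ₖ (1 : Matrix (Fin 2) (Fin 2) ℂ)) *ᵥ bell0)
        = (Real.sqrt (1 - p) : ℂ) := by
      simp [bitFlipK, pauliX, bell0, bell1, bvec, dotProduct, Matrix.mulVec,
        Fintype.sum_prod_type, Fin.sum_univ_two, kroneckerMap_apply, Matrix.one_apply,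
        Complex.star_def, map_inv₀, Complex.conj_ofReal]
      ring_nf
      rw [sqrt2_inv_pow]
      ring
    have c1q0 : star bell1 ⬝ᵥ ((phaseFlipK q 0 ⊗ₖ (1 : Matrix (Fin 2) (Fin 2) ℂ)) *ᵥ bell0)
        = 0 := by
      simp [phaseFlipK, pauliZ, bell0, bell1, bvec, dotProduct, Matrix.mulVec,
        Fintype.sum_prod_type, Fin.sum_univ_two, kroneckerMap_apply, Matrix.one_apply,
        Complex.star_def, map_inv₀, Complex.conj_ofReal]
    have c1q1 : star bell1 ⬝ᵥ ((phaseFlipK q 1 ⊗ₖ (1 : Matrix (Fin 2) (Fin 2) ℂ)) *ᵥ bell0)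
        = 0 := by
      simp [phaseFlipK, pauliZ, bell0, bell1, bvec, dotProduct, Matrix.mulVec,
        Fintype.sum_prod_type, Fin.sum_univ_two, kroneckerMap_apply, Matrix.one_apply,
        Complex.star_def, map_inv₀, Complex.conj_ofReal]
    have c2p0 : star bell2 ⬝ᵥ ((bitFlipK p 0 ⊗ₖ (1 : Matrix (Fin 2) (Fin 2) ℂ)) *ᵥ bell0)
        = 0 := by
      simp [bitFlipK, pauliX, bell0, bell2, bvec, dotProduct, Matrix.mulVec,
        Fintype.sum_prod_type, Fin.sum_univ_two, kroneckerMap_apply, Matrix.one_apply,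
        Complex.star_def, map_inv₀, Complex.conj_ofReal]
    have c2p1 : star bell2 ⬝ᵥ ((bitFlipK p 1 ⊗ₖ (1 : Matrix (Fin 2) (Fin 2) ℂ)) *ᵥ bell0)
        = 0 := by
      simp [bitFlipK, pauliX, bell0, bell2, bvec, dotProduct, Matrix.mulVec,
        Fintype.sum_prod_type, Fin.sum_univ_two, kroneckerMap_apply, Matrix.one_apply,
        Complex.star_def, map_inv₀, Complex.conj_ofReal]
    have c2q0 : star bell2 ⬝ᵥ ((phaseFlipK q 0 ⊗ₖ (1 : Matrix (Fin 2) (Fin 2) ℂ)) *ᵥ bell0)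
        = 0 := by
      simp [phaseFlipK, pauliZ, bell0, bell2, bvec, dotProduct, Matrix.mulVec,
        Fintype.sum_prod_type, Fin.sum_univ_two, kroneckerMap_apply, Matrix.one_apply,
        Complex.star_def, map_inv₀, Complex.conj_ofReal]
    have c2q1 : star bell2 ⬝ᵥ ((phaseFlipK q 1 ⊗ₖ (1 : Matrix (Fin 2) (Fin 2) ℂ)) *ᵥ bell0)
        = (Real.sqrt (1 - q) : ℂ) := by
      simp [phaseFlipK, pauliZ, bell0, bell2, bvec, dotProduct, Matrix.mulVec,
        Fintype.sum_prod_type, Fin.sum_univ_two, kroneckerMap_apply, Matrix.one_apply,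
        Complex.star_def, map_inv₀, Complex.conj_ofReal]
      ring_nf
      rw [sqrt2_inv_pow]
      ring
    refine ⟨vecMulVec bell0 (star bell0) + vecMulVec bell3 (star bell3),
      ![vecMulVec bell1 (star bell1), vecMulVec bell2 (star bell2)],
      psd_add' (outer_posSemidef _) (outer_posSemidef _), ?_, ?_, ?_, ?_⟩
    · intro i
      fin_cases i
      · exact outer_posSemidef _
      · exact outer_posSemidef _
    · simp only [Fin.sum_univ_two, Matrix.cons_val_zero, Matrix.cons_val_one, Matrix.head_cons]
      ext ⟨a, b⟩ ⟨c, d⟩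
      fin_cases a <;> fin_cases b <;> fin_cases c <;> fin_cases d <;>
        simp [bell0, bell1, bell2, bell3, bvec, vecMulVec_apply, Matrix.one_apply,
          Prod.ext_iff, Complex.star_def, map_inv₀, Complex.conj_ofReal] <;>
        ring_nf <;>
        norm_num [sqrt2_inv_pow, sqrt2_pow]
    · intro i j hij
      fin_cases i <;> fin_cases j <;>
        simp only [Matrix.cons_val_zero, Matrix.cons_val_one, Matrix.head_cons,
          Fin.zero_eta, Fin.mk_one, ne_eq] at hij ⊢
      · exact (hij trivial).elim
      · rw [trace_outer_outputOf, c1q0, c1q1]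
        simp
      · rw [trace_outer_outputOf, c2p0, c2p1]
        simp
      · exact (hij trivial).elim
    · intro i
      fin_cases i <;>
        simp only [Matrix.cons_val_zero, Matrix.cons_val_one, Matrix.head_cons, Fin.zero_eta,
          Fin.mk_one]
      · rw [trace_outer_outputOf, c1p0, c1p1]
        simp only [Complex.star_def, Complex.conj_ofReal, zero_mul, zero_add, map_zero]
        rw [← Complex.ofReal_mul, Real.mul_self_sqrt (by linarith)]
        exact_mod_cast Complex.zero_lt_real.mpr (by linarith)
      · rw [trace_outer_outputOf, c2q0, c2q1]
        simp only [Complex.star_def, Complex.conj_ofReal, zero_mul, zero_add, map_zero]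
        rw [← Complex.ofReal_mul, Real.mul_self_sqrt (by linarith)]
        exact_mod_cast Complex.zero_lt_real.mpr (by linarith)
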